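/- Let K ⊆ 𝕊⁺_d (the symmetric positive semi-definite d×d real matrices with Frobenius inner product) be convex, closed, non-empty and bounded with sup_{A,B∈K} ‖A − B‖_F ≤ U. Suppose at each round t = 1,…,T a convex differentiable loss ℓ_t : 𝕊⁺_d → ℝ₊ is given with ‖∇ℓ_t(A_t)‖_F ≤ D along the trajectory. Consider the online learner A_{t+1} = P_K[ A_t − η ∇ℓ_t(A_t) ], where P_K is the projection onto K in Frobenius norm and A₁ ∈ K. If η = (U/D)·√(1/T), then Σ_{t=1}^T ℓ_t(A_t) − inf_{B∈K} Σ_{t=1}^T ℓ_t(B) ≤ U·D·√T. -/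

import Mathlib

open Finset Real

/-- The Frobenius inner product `⟨X, Y⟩ = Tr(Xᵀ Y)` on `d×d` real matrices. -/
noncomputable def fInner {d : ℕ} (A B : Matrix (Fin d) (Fin d) ℝ) : ℝ :=
  (A.transpose * B).trace

/-- The Frobenius norm `‖X‖_F = √⟨X, X⟩`. -/
noncomputable def fNorm {d : ℕ} (A : Matrix (Fin d) (Fin d) ℝ) : ℝ :=
  Real.sqrt (fInner A A)

lemma fInner_eq {d : ℕ} (A B : Matrix (Fin d) (Fin d) ℝ) :
    fInner A B = ∑ i, ∑ j, A j i * B j i := by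
  simp [fInner, Matrix.trace, Matrix.mul_apply, Matrix.transpose_apply, Matrix.diag]

lemma fInner_comm {d : ℕ} (A B : Matrix (Fin d) (Fin d) ℝ) : fInner A B = fInner B A := by
  simp only [fInner_eq, mul_comm]

lemma fInner_add_left {d : ℕ} (A B C : Matrix (Fin d) (Fin d) ℝ) :
    fInner (A + B) C = fInner A C + fInner B C := by
  simp [fInner_eq, Matrix.add_apply, add_mul, Finset.sum_add_distrib]

lemma fInner_sub_left {d : ℕ} (A B C : Matrix (Fin d) (Fin d) ℝ) :
    fInner (A - B) C = fInner A C - fInner B C := by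
  simp [fInner_eq, Matrix.sub_apply, sub_mul, Finset.sum_sub_distrib]

lemma fInner_smul_left {d : ℕ} (c : ℝ) (A B : Matrix (Fin d) (Fin d) ℝ) :
    fInner (c • A) B = c * fInner A B := by
  simp [fInner_eq, Matrix.smul_apply, smul_eq_mul, mul_assoc, Finset.mul_sum]

lemma fInner_sub_right {d : ℕ} (A B C : Matrix (Fin d) (Fin d) ℝ) :
    fInner A (B - C) = fInner A B - fInner A C := by
  rw [fInner_comm, fInner_sub_left, fInner_comm B A, fInner_comm C A]

lemma fInner_self_nonneg {d : ℕ} (A : Matrix (Fin d) (Fin d) ℝ) : 0 ≤ fInner A A := by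
  rw [fInner_eq]
  exact Finset.sum_nonneg fun i _ => Finset.sum_nonneg fun j _ => mul_self_nonneg _

lemma fNorm_sq {d : ℕ} (A : Matrix (Fin d) (Fin d) ℝ) : fNorm A ^ 2 = fInner A A := by
  rw [fNorm, Real.sq_sqrt (fInner_self_nonneg A)]

lemma fInner_le_of_fNorm_le {d : ℕ} {A : Matrix (Fin d) (Fin d) ℝ} {c : ℝ}
    (h : fNorm A ≤ c) : fInner A A ≤ c ^ 2 := by
  rw [← fNorm_sq]
  exact pow_le_pow_left₀ (Real.sqrt_nonneg _) h 2

lemma fInner_mono_of_fNorm_le {d : ℕ} {A B : Matrix (Fin d) (Fin d) ℝ}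
    (h : fNorm A ≤ fNorm B) : fInner A A ≤ fInner B B := by
  rw [← fNorm_sq, ← fNorm_sq]
  exact pow_le_pow_left₀ (Real.sqrt_nonneg _) h 2

lemma fInner_expand_add {d : ℕ} (X Y : Matrix (Fin d) (Fin d) ℝ) :
    fInner (X + Y) (X + Y) = fInner X X + 2 * fInner X Y + fInner Y Y := by
  rw [fInner_add_left, fInner_comm X (X+Y), fInner_add_left, fInner_comm Y (X+Y), fInner_add_left,
    fInner_comm Y X]
  ring

lemma fInner_expand_sub_smul {d : ℕ} (t : ℝ) (X Y : Matrix (Fin d) (Fin d) ℝ) :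
    fInner (X - t • Y) (X - t • Y)
      = fInner X X - 2 * t * fInner X Y + t ^ 2 * fInner Y Y := by
  rw [fInner_sub_left, fInner_smul_left, fInner_sub_right, fInner_sub_right,
    fInner_comm X (t • Y), fInner_smul_left, fInner_comm Y (t • Y), fInner_smul_left,
    fInner_comm Y X]
  ring

lemma grad_ineq {d : ℕ} {f : Matrix (Fin d) (Fin d) ℝ → ℝ}
    (hconv : ConvexOn ℝ {A : Matrix (Fin d) (Fin d) ℝ | A.PosSemidef} f)
    {Am Bm gf : Matrix (Fin d) (Fin d) ℝ} (hA : Am.PosSemidef) (hB : Bm.PosSemidef)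
    (hder : HasDerivAt (fun s : ℝ => f (Am + s • (Bm - Am))) (fInner gf (Bm - Am)) 0) :
    f Am + fInner gf (Bm - Am) ≤ f Bm := by
  set φ : ℝ → ℝ := fun s => f (Am + s • (Bm - Am)) with hφ
  rw [hasDerivAt_iff_tendsto_slope] at hder
  have hmono : (Set.Ioi (0:ℝ)) ⊆ {(0:ℝ)}ᶜ := fun x hx => ne_of_gt hx
  have hder' : Filter.Tendsto (slope φ 0) (nhdsWithin 0 (Set.Ioi 0)) (nhds (fInner gf (Bm - Am))) :=
    hder.mono_left (nhdsWithin_mono _ hmono)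
  have hev : ∀ᶠ s in nhdsWithin (0:ℝ) (Set.Ioi 0), slope φ 0 s ≤ f Bm - f Am := by
    filter_upwards [Ioc_mem_nhdsGT_of_mem (Set.left_mem_Ico.2 one_pos)] with s hs
    have hcomb := hconv.2 hA hB (show (0:ℝ) ≤ 1 - s by linarith [hs.2]) (show (0:ℝ) ≤ s from hs.1.le) (by ring)
    have heq : (1 - s) • Am + s • Bm = Am + s • (Bm - Am) := by module
    rw [heq] at hcomb
    have h1 : φ s ≤ f Am + s * (f Bm - f Am) := by
      have : (1 - s) * f Am + s * f Bm = f Am + s * (f Bm - f Am) := by ring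
      rw [← this]; exact hcomb
    have h0 : φ 0 = f Am := by simp [hφ]
    rw [slope_def_field, sub_zero, div_le_iff₀ hs.1]
    simp only [h0]
    nlinarith [h1]
  have := le_of_tendsto hder' hev
  linarith

lemma proj_contract {d : ℕ} {K : Set (Matrix (Fin d) (Fin d) ℝ)} (hKconv : Convex ℝ K)
    {proj : Matrix (Fin d) (Fin d) ℝ → Matrix (Fin d) (Fin d) ℝ}
    (hproj : ∀ V, proj V ∈ K ∧ ∀ B ∈ K, fNorm (V - proj V) ≤ fNorm (V - B))
    (V : Matrix (Fin d) (Fin d) ℝ) {B : Matrix (Fin d) (Fin d) ℝ} (hB : B ∈ K) :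
    fInner (proj V - B) (proj V - B) ≤ fInner (V - B) (V - B) := by
  set P := proj V with hP
  have hPK := (hproj V).1
  have hmin := (hproj V).2
  have hip : fInner (V - P) (B - P) ≤ 0 := by
    have key : ∀ t ∈ Set.Ioc (0:ℝ) 1,
        2 * fInner (V - P) (B - P) ≤ t * fInner (B - P) (B - P) := by
      intro t ht
      have hQK : P + t • (B - P) ∈ K := by
        have heq : (1 - t) • P + t • B = P + t • (B - P) := by module
        rw [← heq]
        exact hKconv hPK hB (by linarith [ht.2]) ht.1.le (by ring)
      have h2 : fInner (V - P) (V - P)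
          ≤ fInner (V - (P + t • (B - P))) (V - (P + t • (B - P))) :=
        fInner_mono_of_fNorm_le (hmin _ hQK)
      have heq2 : V - (P + t • (B - P)) = (V - P) - t • (B - P) := by module
      rw [heq2, fInner_expand_sub_smul] at h2
      have h3 : t * (2 * fInner (V - P) (B - P)) ≤ t * (t * fInner (B - P) (B - P)) := by
        nlinarith [h2]
      exact le_of_mul_le_mul_left h3 ht.1
    have htend : Filter.Tendsto (fun t : ℝ => t * fInner (B - P) (B - P))
        (nhdsWithin (0:ℝ) (Set.Ioi 0)) (nhds 0) := by
      have : Filter.Tendsto (fun t : ℝ => t * fInner (B - P) (B - P)) (nhds 0)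
          (nhds (0 * fInner (B - P) (B - P))) :=
        (continuous_id.mul continuous_const).tendsto 0
      simpa using this.mono_left nhdsWithin_le_nhds
    have hev : ∀ᶠ t in nhdsWithin (0:ℝ) (Set.Ioi 0),
        2 * fInner (V - P) (B - P) ≤ t * fInner (B - P) (B - P) := by
      filter_upwards [Ioc_mem_nhdsGT_of_mem (Set.left_mem_Ico.2 one_pos)] with t ht
      exact key t ht
    have := ge_of_tendsto htend hev
    linarith
  have hsplit : V - B = (V - P) + (P - B) := by module
  have hexp : fInner (V - B) (V - B)
      = fInner (V - P) (V - P) + 2 * fInner (V - P) (P - B) + fInner (P - B) (P - B) := by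
    rw [hsplit, fInner_expand_add]
  have hneg : fInner (V - P) (P - B) = fInner (V - P) P - fInner (V - P) B := fInner_sub_right _ _ _
  have hneg2 : fInner (V - P) (B - P) = fInner (V - P) B - fInner (V - P) P := fInner_sub_right _ _ _
  have hVP := fInner_self_nonneg (V - P)
  linarith

theorem stmt_13 {d T : ℕ} (hT : 1 ≤ T) (U D : ℝ) (hU : 0 < U) (hD : 0 < D)
    (K : Set (Matrix (Fin d) (Fin d) ℝ))
    (hKpsd : ∀ A ∈ K, A.PosSemidef)
    (hKconv : Convex ℝ K) (hKclosed : IsClosed K) (hKne : K.Nonempty)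
    (hKbdd : ∀ A ∈ K, ∀ B ∈ K, fNorm (A - B) ≤ U)
    (ℓ : ℕ → Matrix (Fin d) (Fin d) ℝ → ℝ)
    (hℓnonneg : ∀ t, ∀ A, A.PosSemidef → 0 ≤ ℓ t A)
    (hℓconv : ∀ t, ConvexOn ℝ {A : Matrix (Fin d) (Fin d) ℝ | A.PosSemidef} (ℓ t))
    -- `g t A` is the (Gateaux) gradient of `ℓ t` at `A` w.r.t. the Frobenius inner product
    (g : ℕ → Matrix (Fin d) (Fin d) ℝ → Matrix (Fin d) (Fin d) ℝ)
    (hgrad : ∀ t A V, HasDerivAt (fun s : ℝ => ℓ t (A + s • V)) (fInner (g t A) V) 0)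
    -- the projection onto `K` in Frobenius norm
    (proj : Matrix (Fin d) (Fin d) ℝ → Matrix (Fin d) (Fin d) ℝ)
    (hproj : ∀ V, proj V ∈ K ∧ ∀ B ∈ K, fNorm (V - proj V) ≤ fNorm (V - B))
    (η : ℝ) (hη : η = (U / D) * Real.sqrt (1 / T))
    (A : ℕ → Matrix (Fin d) (Fin d) ℝ) (hA1 : A 1 ∈ K)
    (hupd : ∀ t, A (t + 1) = proj (A t - η • g t (A t)))
    (hgradbdd : ∀ t ∈ Icc 1 T, fNorm (g t (A t)) ≤ D) :
    ∑ t ∈ Icc 1 T, ℓ t (A t) - ⨅ B : K, ∑ t ∈ Icc 1 T, ℓ t (B : Matrix (Fin d) (Fin d) ℝ) ≤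
      U * D * Real.sqrt T := by
  set s := Real.sqrt T with hsdef
  have hT1 : (1:ℝ) ≤ (T:ℝ) := by exact_mod_cast hT
  have hspos : 0 < s := Real.sqrt_pos.2 (by linarith)
  have hss : s * s = (T:ℝ) := Real.mul_self_sqrt (by positivity)
  have hηeq : η = U / (D * s) := by
    rw [hη, one_div, Real.sqrt_inv]
    field_simp
    exact hsdef
  have hηpos : 0 < η := by rw [hηeq]; positivity
  have hAK : ∀ t, 1 ≤ t → A t ∈ K := by
    intro t ht
    obtain ⟨n, rfl⟩ : ∃ n, t = n + 1 := ⟨t - 1, by omega⟩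
    rw [hupd n]; exact (hproj _).1
  have main : ∀ B ∈ K, ∑ t ∈ Icc 1 T, ℓ t (A t) ≤ (∑ t ∈ Icc 1 T, ℓ t B) + U * D * s := by
    intro B hB
    set c : ℕ → ℝ := fun n => fInner (A n - B) (A n - B) with hc
    have step : ∀ t ∈ Icc 1 T,
        ℓ t (A t) - ℓ t B ≤ (c t - c (t+1)) / (2*η) + η / 2 * D ^ 2 := by
      intro t ht
      simp only [mem_Icc] at ht
      have hAtK := hAK t ht.1
      have hgi := grad_ineq (hℓconv t) (hKpsd _ hAtK) (hKpsd _ hB) (hgrad t (A t) (B - A t))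
      have hgAB : fInner (g t (A t)) (A t - B) = -(fInner (g t (A t)) (B - A t)) := by
        rw [fInner_sub_right, fInner_sub_right]; ring
      have hc1 : c (t+1) ≤ fInner ((A t - η • g t (A t)) - B) ((A t - η • g t (A t)) - B) := by
        show fInner (A (t+1) - B) (A (t+1) - B) ≤ _
        rw [hupd t]
        exact proj_contract hKconv hproj _ hB
      have heq3 : (A t - η • g t (A t)) - B = (A t - B) - η • g t (A t) := by module
      rw [heq3, fInner_expand_sub_smul] at hc1
      have hgD : fInner (g t (A t)) (g t (A t)) ≤ D ^ 2 :=
        fInner_le_of_fNorm_le (hgradbdd t (by simp [mem_Icc, ht.1, ht.2]))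
      have hcomm : fInner (A t - B) (g t (A t)) = fInner (g t (A t)) (A t - B) :=
        fInner_comm _ _
      have h4 : 2*η*fInner (g t (A t)) (A t - B) ≤ c t - c (t+1) + η^2 * D^2 := by
        nlinarith [hc1, hgD, sq_nonneg η]
      have h5 : fInner (g t (A t)) (A t - B) ≤ (c t - c (t+1) + η^2 * D^2)/(2*η) := by
        rw [le_div_iff₀ (by linarith)]; linarith
      have h6 : (c t - c (t+1) + η^2*D^2)/(2*η) = (c t - c (t+1))/(2*η) + η/2 * D^2 := by
        field_simp
      linarith
    have hsum := Finset.sum_le_sum step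
    have htel : ∑ t ∈ Icc 1 T, (c t - c (t+1)) = c 1 - c (T+1) := by
      rw [← Finset.Ico_add_one_right_eq_Icc, Finset.sum_Ico_eq_sum_range]
      rw [show T + 1 - 1 = T from by omega]
      calc ∑ i ∈ range T, (c (1+i) - c (1+i+1))
          = ∑ i ∈ range T, ((fun j => c (1+j)) i - (fun j => c (1+j)) (i+1)) := by
            refine Finset.sum_congr rfl fun i _ => ?_
            simp [Nat.add_assoc]
        _ = c (1+0) - c (1+T) := Finset.sum_range_sub' _ T
        _ = c 1 - c (T+1) := by rw [Nat.add_comm 1 T]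
    have hc1U : c 1 ≤ U^2 := fInner_le_of_fNorm_le (hKbdd _ hA1 _ hB)
    have hcT : (0:ℝ) ≤ c (T+1) := fInner_self_nonneg _
    have hsum2 : ∑ t ∈ Icc 1 T, ((c t - c (t+1))/(2*η) + η/2*D^2)
        = (c 1 - c (T+1))/(2*η) + T * (η/2*D^2) := by
      rw [Finset.sum_add_distrib, ← Finset.sum_div, htel, Finset.sum_const, Nat.card_Icc]
      rw [show T + 1 - 1 = T from by omega, nsmul_eq_mul]
    have hdiff : ∑ t ∈ Icc 1 T, (ℓ t (A t) - ℓ t B)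
        = ∑ t ∈ Icc 1 T, ℓ t (A t) - ∑ t ∈ Icc 1 T, ℓ t B := Finset.sum_sub_distrib _ _
    have h1 : (c 1 - c (T+1))/(2*η) ≤ U^2/(2*η) :=
      div_le_div_of_nonneg_right (by linarith) (by linarith)
    have heqa : U^2/(2*η) + (T:ℝ)*(η/2*D^2) = U*D*s := by
      rw [hηeq, ← hss]
      field_simp
      ring
    rw [hsum2, hdiff] at hsum
    linarith
  have hne : Nonempty K := hKne.to_subtype
  have hlow : ∑ t ∈ Icc 1 T, ℓ t (A t) - U*D*s
      ≤ ⨅ B : K, ∑ t ∈ Icc 1 T, ℓ t (B : Matrix (Fin d) (Fin d) ℝ) :=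
    le_ciInf fun B => by linarith [main B.1 B.2]
  linarith
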